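/- arXiv:1809.06880 — 4 statements merged into one kernel-verified Lean document; each statement's English description precedes it below -/
import Mathlib

section
/- For density matrices ρ and σ with strictly positive diagonals, the trimming operation is multiplicative under tensor products: (ρ ⊗ σ)‾ = ρ̄ ⊗ σ̄, where X̄ denotes the matrix obtained from X by keeping only the entries X_{ij} with |X_{ij}| = √(X_{ii}X_{jj}) and setting the others to zero. -/
open scoped ComplexOrder

open Kronecker
open scoped Classical

noncomputable def trim {n : Type*} [Fintype n] (ρ : Matrix n n ℂ) :
    Matrix n n ℂ :=
  Matrix.of fun i j =>
    if ‖ρ i j‖ = Real.sqrt ((ρ i i).re * (ρ j j).re) then ρ i j else 0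

lemma psd_det_nonneg {n : ℕ} {M : Matrix (Fin n) (Fin n) ℂ} (hM : M.PosSemidef) :
    0 ≤ M.det := by
  rw [hM.isHermitian.det_eq_prod_eigenvalues]
  have : (0:ℂ) ≤ ∏ i, (hM.isHermitian.eigenvalues i : ℂ) := by
    apply Finset.prod_nonneg
    intro i _
    have := hM.eigenvalues_nonneg i
    exact_mod_cast this
  exact this

lemma diag_im_zero {n : ℕ} {M : Matrix (Fin n) (Fin n) ℂ} (hM : M.PosSemidef)
    (i : Fin n) : (M i i).im = 0 := by
  have h := congrFun (congrFun hM.isHermitian i) i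
  simp only [Matrix.conjTranspose_apply] at h
  have := Complex.conj_eq_iff_im.mp h
  exact this

lemma cs {n : ℕ} {M : Matrix (Fin n) (Fin n) ℂ} (hM : M.PosSemidef)
    (i k : Fin n) :
    ‖M i k‖ ≤ Real.sqrt ((M i i).re * (M k k).re) := by
  have hsub := hM.submatrix ![i, k]
  have hdet := psd_det_nonneg hsub
  rw [Matrix.det_fin_two] at hdet
  simp only [Matrix.submatrix_apply] at hdet
  have hki : M k i = (starRingEnd ℂ) (M i k) := by
    have h := congrFun (congrFun hM.isHermitian k) i
    simpa [Matrix.conjTranspose_apply] using h.symm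
  rw [show ((![i,k] : Fin 2 → Fin n) 0) = i from rfl,
    show ((![i,k] : Fin 2 → Fin n) 1) = k from rfl] at hdet
  rw [hki] at hdet
  have h1 : (M i k * (starRingEnd ℂ) (M i k)).re = ‖M i k‖ ^ 2 := by
    rw [Complex.mul_conj]
    simp [Complex.sq_norm]
  have h2 : ((M i i) * (M k k)).re = (M i i).re * (M k k).re := by
    rw [Complex.mul_re, diag_im_zero hM i, diag_im_zero hM k]; ring
  have hre : 0 ≤ (M i i * M k k - M i k * (starRingEnd ℂ) (M i k)).re := by
    exact (Complex.le_def.mp hdet).1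
  rw [Complex.sub_re, h1, h2] at hre
  have hle : ‖M i k‖ ^ 2 ≤ (M i i).re * (M k k).re := by linarith
  have := Real.sqrt_le_sqrt hle
  rwa [Real.sqrt_sq (norm_nonneg _)] at this

lemma mul_eq_iff {a b A B : ℝ} (ha : 0 ≤ a) (hb : 0 ≤ b) (haA : a ≤ A)
    (hbB : b ≤ B) (hA : 0 < A) (hB : 0 < B) :
    a * b = A * B ↔ a = A ∧ b = B := by
  constructor
  · intro h
    constructor <;> nlinarith
  · rintro ⟨rfl, rfl⟩; rfl

theorem stmt_10 {d₁ d₂ : ℕ} (ρ : Matrix (Fin d₁) (Fin d₁) ℂ)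
    (σ : Matrix (Fin d₂) (Fin d₂) ℂ) (hρ : ρ.PosSemidef) (hσ : σ.PosSemidef)
    (hρtr : ρ.trace = 1) (hσtr : σ.trace = 1)
    (hρdiag : ∀ i, 0 < (ρ i i).re) (hσdiag : ∀ j, 0 < (σ j j).re) :
    trim (ρ ⊗ₖ σ) = trim ρ ⊗ₖ trim σ := by
  funext p q
  obtain ⟨i, j⟩ := p
  obtain ⟨k, l⟩ := q
  simp only [trim, Matrix.of_apply, Matrix.kroneckerMap_apply]
  have hA : (0:ℝ) < Real.sqrt ((ρ i i).re * (ρ k k).re) :=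
    Real.sqrt_pos.mpr (mul_pos (hρdiag i) (hρdiag k))
  have hB : (0:ℝ) < Real.sqrt ((σ j j).re * (σ l l).re) :=
    Real.sqrt_pos.mpr (mul_pos (hσdiag j) (hσdiag l))
  have hdiag : ∀ (a : Fin d₁) (b : Fin d₂),
      ((ρ a a * σ b b)).re = (ρ a a).re * (σ b b).re := by
    intro a b
    rw [Complex.mul_re, diag_im_zero hρ a, diag_im_zero hσ b]; ring
  have hsqrt : Real.sqrt ((ρ i i * σ j j).re * (ρ k k * σ l l).re) =
      Real.sqrt ((ρ i i).re * (ρ k k).re) * Real.sqrt ((σ j j).re * (σ l l).re) := by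
    rw [hdiag, hdiag, show (ρ i i).re * (σ j j).re * ((ρ k k).re * (σ l l).re)
      = (ρ i i).re * (ρ k k).re * ((σ j j).re * (σ l l).re) by ring,
      Real.sqrt_mul (mul_pos (hρdiag i) (hρdiag k)).le]
  have hcond : ‖ρ i k * σ j l‖ =
      Real.sqrt ((ρ i i * σ j j).re * (ρ k k * σ l l).re) ↔
      (‖ρ i k‖ = Real.sqrt ((ρ i i).re * (ρ k k).re) ∧
       ‖σ j l‖ = Real.sqrt ((σ j j).re * (σ l l).re)) := by
    rw [hsqrt, norm_mul]
    exact mul_eq_iff (norm_nonneg _) (norm_nonneg _)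
      (cs hρ i k) (cs hσ j l) hA hB
  by_cases h1 : ‖ρ i k‖ = Real.sqrt ((ρ i i).re * (ρ k k).re) <;>
    by_cases h2 : ‖σ j l‖ = Real.sqrt ((σ j j).re * (σ l l).re)
  · simp only [if_pos (hcond.mpr ⟨h1, h2⟩), if_pos h1, if_pos h2]
    exact if_pos (hcond.mpr ⟨h1, h2⟩)
  · simp only [if_neg (fun hc => h2 (hcond.mp hc).2), if_neg h2, mul_zero]
    exact if_neg (fun hc => h2 (hcond.mp hc).2)
  · simp only [if_neg (fun hc => h1 (hcond.mp hc).1), if_neg h1, zero_mul]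
    exact if_neg (fun hc => h1 (hcond.mp hc).1)
  · simp only [if_neg (fun hc => h1 (hcond.mp hc).1), if_neg h1, zero_mul]
    exact if_neg (fun hc => h1 (hcond.mp hc).1)
end

section
/- For density matrices ρ and σ with strictly positive diagonals, the quantity Q(ρ) := S(Δ(ρ)) − S(ρ̄) is additive: Q(ρ ⊗ σ) = Q(ρ) + Q(σ). -/
open scoped ComplexOrder
open Kronecker
open scoped Classical
open Polynomial

noncomputable def vNEntropy {n : Type*} [Fintype n] [DecidableEq n]
    {A : Matrix n n ℂ} (hA : A.IsHermitian) : ℝ :=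
  -∑ i, hA.eigenvalues i * Real.log (hA.eigenvalues i)

section Aux

variable {n : Type*} [Fintype n] [DecidableEq n]

lemma my_charpoly_conj (P Q M : Matrix n n ℂ) (hPQ : P * Q = 1) :
    (P * M * Q).charpoly = M.charpoly := by
  have hQP : Q * P = 1 := mul_eq_one_comm.mp hPQ
  unfold Matrix.charpoly
  have hmap : ∀ A B : Matrix n n ℂ, (A * B).map (Polynomial.C : ℂ →+* ℂ[X]) =
      A.map Polynomial.C * B.map Polynomial.C := fun A B => Matrix.map_mul
  have hone : ((1 : Matrix n n ℂ)).map (Polynomial.C : ℂ →+* ℂ[X]) = 1 := by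
    simp
  have hc : P.map (Polynomial.C : ℂ →+* ℂ[X]) * Matrix.scalar n X
      = Matrix.scalar n X * P.map Polynomial.C :=
    ((Matrix.scalar_commute (X : ℂ[X]) (Commute.all X) (P.map Polynomial.C)).symm).eq
  have key : Matrix.charmatrix (P * M * Q) =
      P.map Polynomial.C * Matrix.charmatrix M * Q.map Polynomial.C := by
    unfold Matrix.charmatrix
    rw [Matrix.mul_sub, Matrix.sub_mul]
    congr 1
    · rw [hc, Matrix.mul_assoc, ← hmap, hPQ, hone, Matrix.mul_one]
    · rw [RingHom.mapMatrix_apply, RingHom.mapMatrix_apply, hmap, hmap]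
  rw [key, Matrix.det_mul, Matrix.det_mul, mul_comm, ← mul_assoc, ← Matrix.det_mul, ← hmap,
    hQP, hone, Matrix.det_one, one_mul]

lemma my_charpoly_diagonal (d : n → ℂ) :
    (Matrix.diagonal d).charpoly = ∏ i, (X - C (d i)) := by
  unfold Matrix.charpoly
  have h : Matrix.charmatrix (Matrix.diagonal d) =
      Matrix.diagonal (fun i => (X : ℂ[X]) - C (d i)) := by
    apply Matrix.ext
    intro i j
    by_cases h : i = j
    · subst h; simp [Matrix.charmatrix_apply_eq]
    · rw [Matrix.charmatrix_apply_ne _ _ _ h, Matrix.diagonal_apply_ne _ h,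
        Matrix.diagonal_apply_ne _ h, map_zero, neg_zero]
  rw [h, Matrix.det_diagonal]

omit [DecidableEq n] in
lemma prod_X_sub_C_inj {m : Type*} [Fintype m] (f : n → ℂ) (g : m → ℂ)
    (h : (∏ i, (X - C (f i))) = ∏ j, (X - C (g j))) :
    Finset.univ.val.map f = Finset.univ.val.map g := by
  have h1 : ((Finset.univ.val.map f).map fun a => X - C a).prod.roots
      = ((Finset.univ.val.map g).map fun a => X - C a).prod.roots := by
    rw [Multiset.map_map, Multiset.map_map]
    simp only [Function.comp]
    rw [← Finset.prod_eq_multiset_prod, ← Finset.prod_eq_multiset_prod, h]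
  rwa [roots_multiset_prod_X_sub_C, roots_multiset_prod_X_sub_C] at h1

lemma eigs_multiset {A : Matrix n n ℂ} (hA : A.IsHermitian)
    (P Q : Matrix n n ℂ) (d : n → ℝ) (hPQ : P * Q = 1)
    (hA' : A = P * Matrix.diagonal (fun i => (d i : ℂ)) * Q) :
    Finset.univ.val.map (fun i => ((hA.eigenvalues i : ℝ) : ℂ))
      = Finset.univ.val.map (fun i => ((d i : ℝ) : ℂ)) := by
  have h1 : A.charpoly = ∏ i, (X - C ((d i : ℂ))) := by
    rw [hA', my_charpoly_conj _ _ _ hPQ, my_charpoly_diagonal]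
  have hU : (hA.eigenvectorUnitary : Matrix n n ℂ) *
      (star hA.eigenvectorUnitary : Matrix n n ℂ) = 1 := by
    exact_mod_cast (Matrix.mem_unitaryGroup_iff).mp hA.eigenvectorUnitary.2
  have h2 : A.charpoly = ∏ i, (X - C ((hA.eigenvalues i : ℂ))) := by
    conv_lhs => rw [hA.spectral_theorem, Unitary.conjStarAlgAut_apply]
    rw [my_charpoly_conj _ _ _ hU, my_charpoly_diagonal]
    rfl
  exact prod_X_sub_C_inj _ _ (h2.symm.trans h1)

lemma sum_f_eigs {A : Matrix n n ℂ} (hA : A.IsHermitian)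
    (P Q : Matrix n n ℂ) (d : n → ℝ) (hPQ : P * Q = 1)
    (hA' : A = P * Matrix.diagonal (fun i => (d i : ℂ)) * Q) (f : ℝ → ℝ) :
    ∑ i, f (hA.eigenvalues i) = ∑ i, f (d i) := by
  have h := eigs_multiset hA P Q d hPQ hA'
  calc ∑ i, f (hA.eigenvalues i)
      = ((Finset.univ.val.map (fun i => ((hA.eigenvalues i : ℝ) : ℂ))).map
          (fun z : ℂ => f z.re)).sum := by
        rw [Multiset.map_map, Finset.sum_eq_multiset_sum]
        simp [Function.comp]
    _ = ((Finset.univ.val.map (fun i => ((d i : ℝ) : ℂ))).map (fun z : ℂ => f z.re)).sum := by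
        rw [h]
    _ = ∑ i, f (d i) := by
        rw [Multiset.map_map, Finset.sum_eq_multiset_sum]
        simp [Function.comp]

open scoped MatrixOrder in
lemma my_psd_eq {A : Matrix n n ℂ} (hA : A.PosSemidef) : ∃ B : Matrix n n ℂ, A = B.conjTranspose * B := by
  obtain ⟨X, hX, -, hXA⟩ := CFC.exists_sqrt_of_isSelfAdjoint_of_quasispectrumRestricts
    hA.isHermitian (QuasispectrumRestricts.nnreal_of_nonneg hA.nonneg)
  exact ⟨X, by rw [← hXA]; nth_rw 1 [← hX.star_eq]; rfl⟩

lemma cs_bound {A : Matrix n n ℂ} (hA : A.PosSemidef) (i j : n) :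
    ‖A i j‖ ≤ Real.sqrt ((A i i).re * (A j j).re) := by
  obtain ⟨B, rfl⟩ := my_psd_eq hA
  set x : n → EuclideanSpace ℂ n := fun u => WithLp.toLp 2 (fun k => B k u) with hx
  have key : ∀ u v : n, (B.conjTranspose * B) u v = @inner ℂ (EuclideanSpace ℂ n) _ (x u) (x v) := by
    intro u v
    simp [hx, Matrix.mul_apply, PiLp.inner_apply, Matrix.conjTranspose_apply, RCLike.inner_apply, mul_comm]
  have hnn : ∀ u : n, (0 : ℝ) ≤ ((B.conjTranspose * B) u u).re := by
    intro u
    have h0 : (0 : ℝ) ≤ RCLike.re (@inner ℂ (EuclideanSpace ℂ n) _ (x u) (x u)) :=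
      inner_self_nonneg
    rw [key u u]
    simpa using h0
  have hnorm : ∀ u : n, ‖x u‖ = Real.sqrt (((B.conjTranspose * B) u u).re) := by
    intro u
    rw [norm_eq_sqrt_re_inner (𝕜 := ℂ) (x u), key u u]
    simp
  calc ‖(B.conjTranspose * B) i j‖
      = ‖@inner ℂ (EuclideanSpace ℂ n) _ (x i) (x j)‖ := by
        rw [← key]
    _ ≤ ‖x i‖ * ‖x j‖ := norm_inner_le_norm _ _
    _ = Real.sqrt (((B.conjTranspose * B) i i).re * ((B.conjTranspose * B) j j).re) := by
        rw [hnorm, hnorm, ← Real.sqrt_mul (hnn i)]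



variable {m : Type*} [Fintype m] [DecidableEq m]


lemma diag_real {A : Matrix n n ℂ} (hA : A.IsHermitian) (i : n) :
    A i i = ((A i i).re : ℂ) := by
  have h : (starRingEnd ℂ) (A i i) = A i i := by
    conv_rhs => rw [← hA]
    rfl
  exact (Complex.conj_eq_iff_re.mp h).symm

lemma trim_diag {A : Matrix n n ℂ} (hA : A.IsHermitian) (hd : ∀ i, 0 ≤ (A i i).re) (i : n) :
    trim A i i = A i i := by
  have h1 : ‖A i i‖ = Real.sqrt ((A i i).re * (A i i).re) := by
    rw [Real.sqrt_mul_self (hd i), diag_real hA i, Complex.norm_real, Real.norm_eq_abs, abs_of_nonneg (hd i)]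
    simp
  simp [trim, h1]

lemma trim_kron {ρ : Matrix n n ℂ} {σ : Matrix m m ℂ}
    (hρ : ρ.PosSemidef) (hσ : σ.PosSemidef)
    (hρdiag : ∀ i, 0 < (ρ i i).re) (hσdiag : ∀ j, 0 < (σ j j).re) :
    trim (ρ ⊗ₖ σ) = trim ρ ⊗ₖ trim σ := by
  apply Matrix.ext
  rintro ⟨i, k⟩ ⟨j, l⟩
  have him : ∀ u : n, (ρ u u).im = 0 := fun u => by
    rw [diag_real hρ.1 u]; simp
  have him' : ∀ u : m, (σ u u).im = 0 := fun u => by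
    rw [diag_real hσ.1 u]; simp
  have hre : ∀ (u : n) (v : m), ((ρ ⊗ₖ σ) (u, v) (u, v)).re = (ρ u u).re * (σ v v).re := by
    intro u v
    rw [Matrix.kronecker_apply, Complex.mul_re, him, him']
    ring
  set s1 : ℝ := Real.sqrt ((ρ i i).re * (ρ j j).re) with hs1
  set s2 : ℝ := Real.sqrt ((σ k k).re * (σ l l).re) with hs2
  have hs1pos : 0 < s1 := Real.sqrt_pos.mpr (mul_pos (hρdiag i) (hρdiag j))
  have hs2pos : 0 < s2 := Real.sqrt_pos.mpr (mul_pos (hσdiag k) (hσdiag l))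
  have hsplit : Real.sqrt (((ρ ⊗ₖ σ) (i, k) (i, k)).re * ((ρ ⊗ₖ σ) (j, l) (j, l)).re)
      = s1 * s2 := by
    rw [hre, hre, hs1, hs2, ← Real.sqrt_mul (mul_pos (hρdiag i) (hρdiag j)).le]
    ring_nf
  have habs : ‖(ρ ⊗ₖ σ) (i, k) (j, l)‖
      = ‖ρ i j‖ * ‖σ k l‖ := by
    rw [Matrix.kronecker_apply, norm_mul]
  have hb1 : ‖ρ i j‖ ≤ s1 := cs_bound hρ i j
  have hb2 : ‖σ k l‖ ≤ s2 := cs_bound hσ k l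
  have hiff : ‖ρ i j‖ * ‖σ k l‖ = s1 * s2 ↔
      (‖ρ i j‖ = s1 ∧ ‖σ k l‖ = s2) := by
    constructor
    · intro h
      rcases hb1.lt_or_eq with h1 | h1
      · exfalso
        have : ‖ρ i j‖ * ‖σ k l‖ < s1 * s2 := by
          calc ‖ρ i j‖ * ‖σ k l‖
              ≤ ‖ρ i j‖ * s2 :=
                mul_le_mul_of_nonneg_left hb2 (norm_nonneg _)
            _ < s1 * s2 := (mul_lt_mul_iff_left₀ hs2pos).mpr h1
        exact this.ne h
      rcases hb2.lt_or_eq with h2 | h2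
      · exfalso
        have : ‖ρ i j‖ * ‖σ k l‖ < s1 * s2 := by
          calc ‖ρ i j‖ * ‖σ k l‖
              ≤ s1 * ‖σ k l‖ :=
                mul_le_mul_of_nonneg_right hb1 (norm_nonneg _)
            _ < s1 * s2 := (mul_lt_mul_iff_right₀ hs1pos).mpr h2
        exact this.ne h
      exact ⟨h1, h2⟩
    · rintro ⟨h1, h2⟩; rw [h1, h2]
  show (if ‖(ρ ⊗ₖ σ) (i, k) (j, l)‖ = Real.sqrt _ then _ else _) = _
  rw [Matrix.kronecker_apply]
  by_cases h1 : ‖ρ i j‖ = s1 <;> by_cases h2 : ‖σ k l‖ = s2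
  · rw [if_pos, Matrix.kronecker_apply]
    · simp [trim, ← hs1, ← hs2, h1, h2]
    · rw [← Matrix.kronecker_apply, habs, hsplit]
      exact hiff.mpr ⟨h1, h2⟩
  · rw [if_neg, Matrix.kronecker_apply]
    · simp [trim, ← hs1, ← hs2, h2]
    · rw [← Matrix.kronecker_apply, habs, hsplit]
      intro hcon
      exact h2 (hiff.mp hcon).2
  · rw [if_neg, Matrix.kronecker_apply]
    · simp [trim, ← hs1, ← hs2, h1]
    · rw [← Matrix.kronecker_apply, habs, hsplit]
      intro hcon
      exact h1 (hiff.mp hcon).1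
  · rw [if_neg, Matrix.kronecker_apply]
    · simp [trim, ← hs1, ← hs2, h1]
    · rw [← Matrix.kronecker_apply, habs, hsplit]
      intro hcon
      exact h1 (hiff.mp hcon).1

lemma eig_sum_one {A : Matrix n n ℂ} (hA : A.IsHermitian) (htr : A.trace = 1) :
    ∑ i, hA.eigenvalues i = 1 := by
  have hU : (hA.eigenvectorUnitary : Matrix n n ℂ) *
      (star hA.eigenvectorUnitary : Matrix n n ℂ) = 1 := by
    exact_mod_cast (Matrix.mem_unitaryGroup_iff).mp hA.eigenvectorUnitary.2
  have hU' : (star hA.eigenvectorUnitary : Matrix n n ℂ) *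
      (hA.eigenvectorUnitary : Matrix n n ℂ) = 1 := mul_eq_one_comm.mp hU
  have h : A.trace = ∑ i, (hA.eigenvalues i : ℂ) := by
    conv_lhs => rw [hA.spectral_theorem, Unitary.conjStarAlgAut_apply]
    rw [Matrix.trace_mul_cycle, hU', Matrix.one_mul, Matrix.trace_diagonal]
    rfl
  rw [htr] at h
  have h2 : ((∑ i, hA.eigenvalues i : ℝ) : ℂ) = 1 := by
    push_cast
    exact h.symm
  exact_mod_cast h2

lemma sum_f_mul (u : n → ℝ) (v : m → ℝ) (hu : ∑ i, u i = 1) (hv : ∑ j, v j = 1) :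
    ∑ p : n × m, (u p.1 * v p.2) * Real.log (u p.1 * v p.2)
      = ∑ i, u i * Real.log (u i) + ∑ j, v j * Real.log (v j) := by
  have hf : ∀ x y : ℝ, (x * y) * Real.log (x * y)
      = x * (y * Real.log y) + y * (x * Real.log x) := by
    intro x y
    rcases eq_or_ne x 0 with rfl | hx
    · simp
    rcases eq_or_ne y 0 with rfl | hy
    · simp
    rw [Real.log_mul hx hy]
    ring
  rw [Fintype.sum_prod_type]
  simp_rw [hf, Finset.sum_add_distrib, ← Finset.mul_sum, ← Finset.sum_mul, hv, hu, one_mul]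
  ring

end Aux

theorem stmt_11 {d₁ d₂ : ℕ} (ρ : Matrix (Fin d₁) (Fin d₁) ℂ)
    (σ : Matrix (Fin d₂) (Fin d₂) ℂ) (hρ : ρ.PosSemidef) (hσ : σ.PosSemidef)
    (hρtr : ρ.trace = 1) (hσtr : σ.trace = 1)
    (hρdiag : ∀ i, 0 < (ρ i i).re) (hσdiag : ∀ j, 0 < (σ j j).re)
    (hΔρ : (Matrix.diagonal fun i => ρ i i).IsHermitian)
    (hΔσ : (Matrix.diagonal fun j => σ j j).IsHermitian)
    (hΔρσ : (Matrix.diagonal fun p : Fin d₁ × Fin d₂ =>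
        (ρ ⊗ₖ σ) p p).IsHermitian)
    (htρ : (trim ρ).IsHermitian) (htσ : (trim σ).IsHermitian)
    (htρσ : (trim (ρ ⊗ₖ σ)).IsHermitian) :
    vNEntropy hΔρσ - vNEntropy htρσ =
      (vNEntropy hΔρ - vNEntropy htρ) + (vNEntropy hΔσ - vNEntropy htσ) := by
  set a : Fin d₁ → ℝ := fun i => (ρ i i).re with ha
  set b : Fin d₂ → ℝ := fun j => (σ j j).re with hb
  -- sums equal one
  have hsa : ∑ i, a i = 1 := by
    have h := congrArg Complex.re hρtr
    simpa [Matrix.trace, Matrix.diag, ha] using h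
  have hsb : ∑ j, b j = 1 := by
    have h := congrArg Complex.re hσtr
    simpa [Matrix.trace, Matrix.diag, hb] using h
  have htrim_tr_ρ : (trim ρ).trace = 1 := by
    rw [← hρtr]
    unfold Matrix.trace
    apply Finset.sum_congr rfl
    intro i _
    exact trim_diag hρ.1 (fun u => (hρdiag u).le) i
  have htrim_tr_σ : (trim σ).trace = 1 := by
    rw [← hσtr]
    unfold Matrix.trace
    apply Finset.sum_congr rfl
    intro j _
    exact trim_diag hσ.1 (fun u => (hσdiag u).le) j
  have hslam : ∑ i, htρ.eigenvalues i = 1 := eig_sum_one htρ htrim_tr_ρ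
  have hsμ : ∑ j, htσ.eigenvalues j = 1 := eig_sum_one htσ htrim_tr_σ
  -- diagonal decompositions
  have hΔρ_eq : (Matrix.diagonal fun i => ρ i i)
      = (1 : Matrix (Fin d₁) (Fin d₁) ℂ) * Matrix.diagonal (fun i => ((a i : ℝ) : ℂ)) * 1 := by
    rw [Matrix.one_mul, Matrix.mul_one]
    apply congrArg Matrix.diagonal
    funext i
    exact diag_real hρ.1 i
  have hΔσ_eq : (Matrix.diagonal fun j => σ j j)
      = (1 : Matrix (Fin d₂) (Fin d₂) ℂ) * Matrix.diagonal (fun j => ((b j : ℝ) : ℂ)) * 1 := by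
    rw [Matrix.one_mul, Matrix.mul_one]
    apply congrArg Matrix.diagonal
    funext j
    exact diag_real hσ.1 j
  have hΔρσ_eq : (Matrix.diagonal fun p : Fin d₁ × Fin d₂ => (ρ ⊗ₖ σ) p p)
      = (1 : Matrix (Fin d₁ × Fin d₂) (Fin d₁ × Fin d₂) ℂ)
        * Matrix.diagonal (fun p : Fin d₁ × Fin d₂ => ((a p.1 * b p.2 : ℝ) : ℂ)) * 1 := by
    rw [Matrix.one_mul, Matrix.mul_one]
    apply congrArg Matrix.diagonal
    funext p
    obtain ⟨p1, p2⟩ := p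
    rw [Matrix.kronecker_apply, diag_real hρ.1 p1, diag_real hσ.1 p2]
    push_cast
    rfl
  -- trim decompositions
  have hUρ : (htρ.eigenvectorUnitary : Matrix (Fin d₁) (Fin d₁) ℂ) *
      (star htρ.eigenvectorUnitary : Matrix (Fin d₁) (Fin d₁) ℂ) = 1 := by
    exact_mod_cast (Matrix.mem_unitaryGroup_iff).mp htρ.eigenvectorUnitary.2
  have hUσ : (htσ.eigenvectorUnitary : Matrix (Fin d₂) (Fin d₂) ℂ) *
      (star htσ.eigenvectorUnitary : Matrix (Fin d₂) (Fin d₂) ℂ) = 1 := by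
    exact_mod_cast (Matrix.mem_unitaryGroup_iff).mp htσ.eigenvectorUnitary.2
  have hP : ((htρ.eigenvectorUnitary : Matrix (Fin d₁) (Fin d₁) ℂ) ⊗ₖ
        (htσ.eigenvectorUnitary : Matrix (Fin d₂) (Fin d₂) ℂ)) *
      ((star htρ.eigenvectorUnitary : Matrix (Fin d₁) (Fin d₁) ℂ) ⊗ₖ
        (star htσ.eigenvectorUnitary : Matrix (Fin d₂) (Fin d₂) ℂ)) = 1 := by
    rw [← Matrix.mul_kronecker_mul, hUρ, hUσ, Matrix.one_kronecker_one]
  have hkron : trim (ρ ⊗ₖ σ)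
      = ((htρ.eigenvectorUnitary : Matrix (Fin d₁) (Fin d₁) ℂ) ⊗ₖ
          (htσ.eigenvectorUnitary : Matrix (Fin d₂) (Fin d₂) ℂ))
        * Matrix.diagonal (fun p : Fin d₁ × Fin d₂ =>
            ((htρ.eigenvalues p.1 * htσ.eigenvalues p.2 : ℝ) : ℂ))
        * ((star htρ.eigenvectorUnitary : Matrix (Fin d₁) (Fin d₁) ℂ) ⊗ₖ
          (star htσ.eigenvectorUnitary : Matrix (Fin d₂) (Fin d₂) ℂ)) := by
    rw [trim_kron hρ hσ hρdiag hσdiag]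
    conv_lhs => rw [htρ.spectral_theorem, htσ.spectral_theorem, Unitary.conjStarAlgAut_apply,
      Unitary.conjStarAlgAut_apply]
    rw [Matrix.mul_kronecker_mul, Matrix.mul_kronecker_mul, Matrix.diagonal_kronecker_diagonal]
    congr 1
    congr 1
    apply congrArg Matrix.diagonal
    funext p
    push_cast
    rfl
  -- entropy sums
  have E1 : ∑ i, hΔρ.eigenvalues i * Real.log (hΔρ.eigenvalues i)
      = ∑ i, a i * Real.log (a i) :=
    sum_f_eigs hΔρ 1 1 a (Matrix.one_mul 1) hΔρ_eq (fun x => x * Real.log x)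
  have E2 : ∑ j, hΔσ.eigenvalues j * Real.log (hΔσ.eigenvalues j)
      = ∑ j, b j * Real.log (b j) :=
    sum_f_eigs hΔσ 1 1 b (Matrix.one_mul 1) hΔσ_eq (fun x => x * Real.log x)
  have E3 : ∑ p : Fin d₁ × Fin d₂, hΔρσ.eigenvalues p * Real.log (hΔρσ.eigenvalues p)
      = ∑ p : Fin d₁ × Fin d₂, (a p.1 * b p.2) * Real.log (a p.1 * b p.2) :=
    sum_f_eigs hΔρσ 1 1 (fun p => a p.1 * b p.2) (Matrix.one_mul 1) hΔρσ_eq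
      (fun x => x * Real.log x)
  have E4 : ∑ p : Fin d₁ × Fin d₂, htρσ.eigenvalues p * Real.log (htρσ.eigenvalues p)
      = ∑ p : Fin d₁ × Fin d₂, (htρ.eigenvalues p.1 * htσ.eigenvalues p.2)
          * Real.log (htρ.eigenvalues p.1 * htσ.eigenvalues p.2) :=
    sum_f_eigs htρσ _ _ (fun p => htρ.eigenvalues p.1 * htσ.eigenvalues p.2) hP hkron
      (fun x => x * Real.log x)
  have F1 := sum_f_mul a b hsa hsb
  have F2 := sum_f_mul htρ.eigenvalues htσ.eigenvalues hslam hsμ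
  simp only [vNEntropy]
  rw [E1, E2, E3, E4, F1, F2]
  ring
end

section
/- For every density matrix ρ with strictly positive diagonal, 0 ≤ Q(ρ) ≤ S(Δ(ρ)) − S(ρ), where Q(ρ) = S(Δ(ρ)) − S(ρ̄). -/
open scoped ComplexOrder

open scoped Classical

private lemma sum_negMulLog_le' {m : ℕ} (C : Fin m → Fin m → ℝ) (lam : Fin m → ℝ)
    (hC0 : ∀ j k, 0 ≤ C j k) (hrow : ∀ j, ∑ k, C j k = 1) (hcol : ∀ k, ∑ j, C j k = 1)
    (hlam : ∀ k, 0 ≤ lam k) :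
    ∑ k, Real.negMulLog (lam k) ≤ ∑ j, Real.negMulLog (∑ k, C j k * lam k) := by
  calc ∑ k, Real.negMulLog (lam k) = ∑ k, (∑ j, C j k) * Real.negMulLog (lam k) := by
        refine Finset.sum_congr rfl fun k _ => ?_
        rw [hcol, one_mul]
    _ = ∑ j, ∑ k, C j k * Real.negMulLog (lam k) := by
        rw [Finset.sum_comm]
        exact Finset.sum_congr rfl fun k _ => by rw [Finset.sum_mul]
    _ ≤ ∑ j, Real.negMulLog (∑ k, C j k * lam k) := by
        refine Finset.sum_le_sum fun j _ => ?_
        have := Real.concaveOn_negMulLog.le_map_sum (t := Finset.univ) (w := C j) (p := lam)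
          (fun k _ => hC0 j k) (hrow j) (fun k _ => hlam k)
        simpa [smul_eq_mul] using this

private lemma diag_conj_re' {d : ℕ} (W : Matrix (Fin d) (Fin d) ℂ) (f : Fin d → ℝ) (j : Fin d) :
    ((W * Matrix.diagonal (fun k => (f k : ℂ)) * star W) j j).re
      = ∑ k, Complex.normSq (W j k) * f k := by
  rw [Matrix.mul_apply]
  rw [Complex.re_sum]
  refine Finset.sum_congr rfl fun k _ => ?_
  rw [Matrix.mul_diagonal, Matrix.star_apply]
  have : W j k * (f k : ℂ) * star (W j k) = ((Complex.normSq (W j k) * f k : ℝ) : ℂ) := by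
    have h1 : W j k * star (W j k) = ((Complex.normSq (W j k) : ℝ) : ℂ) := Complex.mul_conj _
    push_cast
    rw [mul_comm (W j k) ((f k : ℂ)), mul_assoc, h1]
    ring
  rw [this, Complex.ofReal_re]

private lemma row_sum_normSq' {d : ℕ} {W : Matrix (Fin d) (Fin d) ℂ} (h : W * star W = 1)
    (j : Fin d) : ∑ k, Complex.normSq (W j k) = 1 := by
  have h2 := congrArg (fun M => (M j j).re) h
  simp only [Matrix.mul_apply, Matrix.star_apply, Complex.mul_conj, Matrix.one_apply_eq] at h2
  rw [Complex.re_sum] at h2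
  simpa [Complex.normSq_apply] using h2

private lemma col_sum_normSq' {d : ℕ} {W : Matrix (Fin d) (Fin d) ℂ} (h : star W * W = 1)
    (k : Fin d) : ∑ j, Complex.normSq (W j k) = 1 := by
  have h2 := congrArg (fun M => (M k k).re) h
  simp only [Matrix.mul_apply, Matrix.star_apply, Complex.mul_conj', Matrix.one_apply_eq] at h2
  rw [Complex.re_sum] at h2
  simpa [Complex.normSq_apply] using h2

private lemma spectral' {d : ℕ} {A : Matrix (Fin d) (Fin d) ℂ} (hA : A.IsHermitian) :
    A = (hA.eigenvectorUnitary : Matrix (Fin d) (Fin d) ℂ)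
        * Matrix.diagonal (fun k => (hA.eigenvalues k : ℂ))
        * star (hA.eigenvectorUnitary : Matrix (Fin d) (Fin d) ℂ) := by
  have := hA.spectral_theorem
  rw [Unitary.conjStarAlgAut_apply] at this
  exact this

private lemma core' {d : ℕ} {A : Matrix (Fin d) (Fin d) ℂ} (hA : A.PosSemidef)
    (V : Matrix (Fin d) (Fin d) ℂ) (hV1 : star V * V = 1) (hV2 : V * star V = 1) :
    ∑ k, Real.negMulLog (hA.1.eigenvalues k)
      ≤ ∑ j, Real.negMulLog (((star V * A * V) j j).re) := by
  set U : Matrix (Fin d) (Fin d) ℂ := (hA.1.eigenvectorUnitary : Matrix (Fin d) (Fin d) ℂ) with hU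
  have hU1 : star U * U = 1 := Unitary.coe_star_mul_self hA.1.eigenvectorUnitary
  have hU2 : U * star U = 1 := Unitary.coe_mul_star_self hA.1.eigenvectorUnitary
  set W : Matrix (Fin d) (Fin d) ℂ := star V * U with hWdef
  have hsW : star W = star U * V := by rw [hWdef, star_mul, star_star]
  have hW2 : W * star W = 1 := by
    rw [hWdef, hsW, Matrix.mul_assoc, ← Matrix.mul_assoc U, hU2, Matrix.one_mul, hV1]
  have hW1 : star W * W = 1 := by
    rw [hsW, hWdef, Matrix.mul_assoc, ← Matrix.mul_assoc V, hV2, Matrix.one_mul, hU1]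
  have key : star V * A * V
      = W * Matrix.diagonal (fun k => (hA.1.eigenvalues k : ℂ)) * star W := by
    conv_lhs => rw [spectral' hA.1]
    rw [hsW, hWdef]
    simp only [Matrix.mul_assoc]
    rfl
  rw [key]
  have hre : ∀ j, ((W * Matrix.diagonal (fun k => ((hA.1.eigenvalues k : ℝ) : ℂ)) * star W) j j).re
      = ∑ k, Complex.normSq (W j k) * hA.1.eigenvalues k := fun j => diag_conj_re' W _ j
  calc ∑ k, Real.negMulLog (hA.1.eigenvalues k)
      ≤ ∑ j, Real.negMulLog (∑ k, Complex.normSq (W j k) * hA.1.eigenvalues k) :=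
        sum_negMulLog_le' _ _ (fun j k => Complex.normSq_nonneg _)
          (fun j => row_sum_normSq' hW2 j) (fun k => col_sum_normSq' hW1 k)
          hA.eigenvalues_nonneg
    _ = _ := by
        exact Finset.sum_congr rfl fun j _ => by rw [hre j]

private lemma eigsum_eq' {d : ℕ} {A : Matrix (Fin d) (Fin d) ℂ} (hA : A.IsHermitian)
    (V : Matrix (Fin d) (Fin d) ℂ) (hV1 : star V * V = 1) (hV2 : V * star V = 1)
    (w : Fin d → ℝ) (hw : ∀ j, 0 ≤ w j)
    (hAeq : A = V * Matrix.diagonal (fun j => (w j : ℂ)) * star V) :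
    ∑ k, Real.negMulLog (hA.eigenvalues k) = ∑ j, Real.negMulLog (w j) := by
  have hPSD : A.PosSemidef := by
    rw [hAeq, Matrix.star_eq_conjTranspose V]
    exact (Matrix.posSemidef_diagonal_iff.mpr fun j => Complex.zero_le_real.mpr (hw j)
      ).mul_mul_conjTranspose_same V
  apply le_antisymm
  · have h := core' hPSD V hV1 hV2
    have hdiag : star V * A * V = Matrix.diagonal (fun j => (w j : ℂ)) := by
      rw [hAeq]
      rw [Matrix.mul_assoc, Matrix.mul_assoc, hV1, Matrix.mul_one, ← Matrix.mul_assoc, hV1,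
        Matrix.one_mul]
    rw [hdiag] at h
    calc ∑ k, Real.negMulLog (hA.eigenvalues k)
        = ∑ k, Real.negMulLog (hPSD.1.eigenvalues k) := rfl
      _ ≤ ∑ j, Real.negMulLog ((Matrix.diagonal (fun j => (w j : ℂ)) j j).re) := h
      _ = ∑ j, Real.negMulLog (w j) := by
          exact Finset.sum_congr rfl fun j _ => by rw [Matrix.diagonal_apply_eq, Complex.ofReal_re]
  · set U : Matrix (Fin d) (Fin d) ℂ := (hA.eigenvectorUnitary : Matrix (Fin d) (Fin d) ℂ) with hU
    have hU1 : star U * U = 1 := Unitary.coe_star_mul_self hA.eigenvectorUnitary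
    have hU2 : U * star U = 1 := Unitary.coe_mul_star_self hA.eigenvectorUnitary
    set W : Matrix (Fin d) (Fin d) ℂ := star U * V with hWdef
    have hsW : star W = star V * U := by rw [hWdef, star_mul, star_star]
    have hW2 : W * star W = 1 := by
      rw [hWdef, hsW, Matrix.mul_assoc, ← Matrix.mul_assoc V, hV2, Matrix.one_mul, hU1]
    have hW1 : star W * W = 1 := by
      rw [hsW, hWdef, Matrix.mul_assoc, ← Matrix.mul_assoc U, hU2, Matrix.one_mul, hV1]
    have key : star U * A * U = W * Matrix.diagonal (fun j => (w j : ℂ)) * star W := by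
      conv_lhs => rw [hAeq]
      rw [hsW, hWdef]
      simp only [Matrix.mul_assoc]
    have keyd : star U * A * U = Matrix.diagonal (fun k => (hA.eigenvalues k : ℂ)) := by
      conv_lhs => rw [spectral' hA]
      rw [Matrix.mul_assoc, Matrix.mul_assoc, ← hU, hU1, Matrix.mul_one, ← Matrix.mul_assoc, hU1,
        Matrix.one_mul]
    have hlam : ∀ k, hA.eigenvalues k = ∑ j, Complex.normSq (W k j) * w j := by
      intro k
      have := diag_conj_re' W w k
      rw [← key, keyd, Matrix.diagonal_apply_eq, Complex.ofReal_re] at this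
      exact this
    calc ∑ j, Real.negMulLog (w j)
        ≤ ∑ k, Real.negMulLog (∑ j, Complex.normSq (W k j) * w j) :=
          sum_negMulLog_le' _ _ (fun j k => Complex.normSq_nonneg _)
            (fun j => row_sum_normSq' hW2 j) (fun k => col_sum_normSq' hW1 k) hw
      _ = ∑ k, Real.negMulLog (hA.eigenvalues k) :=
          Finset.sum_congr rfl fun k _ => by rw [← hlam k]

theorem stmt_12 {d : ℕ} (ρ : Matrix (Fin d) (Fin d) ℂ) (hρ : ρ.PosSemidef)
    (htr : ρ.trace = 1) (hdiag : ∀ i, 0 < (ρ i i).re)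
    (hΔ : (Matrix.diagonal fun i => ρ i i).IsHermitian)
    (ht : (trim ρ).IsHermitian) :
    0 ≤ vNEntropy hΔ - vNEntropy ht ∧
      vNEntropy hΔ - vNEntropy ht ≤ vNEntropy hΔ - vNEntropy hρ.isHermitian := by
  classical

  classical
  have herm := hρ.isHermitian
  set p : Fin d → ℝ := fun i => (ρ i i).re with hp
  have hdiagC : ∀ i, ρ i i = (p i : ℂ) := by
    intro i
    have h : (starRingEnd ℂ) (ρ i i) = ρ i i := herm.apply i i
    exact (Complex.conj_eq_iff_re.mp h).symm
  have hpnn : ∀ i, 0 ≤ p i := fun i => (hdiag i).le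
  set rel : Fin d → Fin d → Prop :=
    fun i j => ‖ρ i j‖ = Real.sqrt ((ρ i i).re * (ρ j j).re) with hreldef
  have htrim_apply : ∀ i j, trim ρ i j = if rel i j then ρ i j else 0 := fun i j => rfl
  have hrel_iff : ∀ i j, rel i j ↔ ‖ρ i j‖ = Real.sqrt (p i * p j) := by
    intro i j; rw [hreldef]
  have hrel_refl : ∀ i, rel i i := by
    intro i
    rw [hrel_iff]
    rw [hdiagC i, Complex.norm_real, Real.norm_eq_abs, abs_of_nonneg (hpnn i), Real.sqrt_mul_self (hpnn i)]
  have hconj : ∀ i j, (starRingEnd ℂ) (ρ j i) = ρ i j := fun i j => herm.apply i j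
  have habs_symm : ∀ i j, ‖ρ j i‖ = ‖ρ i j‖ := by
    intro i j
    rw [← hconj i j]
    exact (Complex.norm_conj _).symm
  have hrel_symm : ∀ i j, rel i j → rel j i := by
    intro i j h
    rw [hrel_iff] at h ⊢
    rw [habs_symm i j, h, mul_comm]
  have hnormSq : ∀ i j, rel i j → Complex.normSq (ρ i j) = p i * p j := by
    intro i j h
    rw [hrel_iff] at h
    rw [← Complex.sq_norm, h, Real.sq_sqrt (mul_nonneg (hpnn i) (hpnn j))]
  have hblock : ∀ j r, rel j r → ∀ k, (p r : ℂ) * ρ k j = ρ k r * ρ r j := by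
    intro j r hjr k
    by_cases hjr' : j = r
    · subst hjr'
      rw [hdiagC j]
      ring
    · set x : Fin d → ℂ :=
        fun l => (if l = j then ((p r : ℝ) : ℂ) else 0) + (if l = r then -(ρ r j) else 0) with hx
      have hmv : ∀ k, (Matrix.mulVec ρ x) k = ρ k j * (p r : ℂ) + ρ k r * (-(ρ r j)) := by
        intro k
        simp only [Matrix.mulVec, dotProduct, hx, mul_add, mul_ite, mul_zero,
          Finset.sum_add_distrib, Finset.sum_ite_eq', Finset.mem_univ, if_true]
      have hdot : ∀ y : Fin d → ℂ,
          dotProduct (star x) y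
            = (p r : ℂ) * y j + (-(starRingEnd ℂ (ρ r j))) * y r := by
        intro y
        simp only [dotProduct, hx, Pi.star_apply, star_add, apply_ite (starRingEnd ℂ), map_zero, map_neg,
          add_mul, ite_mul, zero_mul, Finset.sum_add_distrib, Finset.sum_ite_eq', Finset.mem_univ,
          if_true, Complex.star_def, Complex.conj_ofReal]
      have hz : (starRingEnd ℂ) (ρ r j) * ρ r j = ((p r * p j : ℝ) : ℂ) := by
        rw [mul_comm, Complex.mul_conj, hnormSq r j (hrel_symm j r hjr)]
      have h0 : dotProduct (star x) (Matrix.mulVec ρ x) = 0 := by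
        rw [hdot, hmv, hmv, hdiagC j, hdiagC r, ← hconj j r]
        push_cast at hz ⊢
        linear_combination (-((p r : ℂ))) * hz
      have hker := (hρ.dotProduct_mulVec_zero_iff x).mp h0
      have hk : Matrix.mulVec ρ x k = 0 := by rw [hker]; rfl
      rw [hmv k] at hk
      linear_combination hk
  have hsame : ∀ i j r, rel i r → rel j r → rel j i := by
    intro i j r hir hjr
    have h2 := congrArg (‖·‖) (hblock i r hir j)
    rw [norm_mul, norm_mul, Complex.norm_real, Real.norm_eq_abs, abs_of_pos (hdiag r)] at h2
    rw [(hrel_iff _ _).mp hjr] at h2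
    rw [(hrel_iff _ _).mp (hrel_symm i r hir)] at h2
    have h3 : Real.sqrt (p j * p r) * Real.sqrt (p r * p i)
        = p r * Real.sqrt (p j * p i) := by
      rw [← Real.sqrt_mul (mul_nonneg (hpnn j) (hpnn r))]
      rw [show p j * p r * (p r * p i) = (p r * p r) * (p j * p i) by ring]
      rw [Real.sqrt_mul (mul_nonneg (hpnn r) (hpnn r)), Real.sqrt_mul_self (hpnn r)]
    rw [h3] at h2
    rw [hrel_iff]
    exact mul_left_cancel₀ (ne_of_gt (hdiag r)) h2
  have hne : ∀ i, (Finset.univ.filter (fun j => rel i j)).Nonempty := fun i =>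
    ⟨i, Finset.mem_filter.mpr ⟨Finset.mem_univ i, hrel_refl i⟩⟩
  set repf : Fin d → Fin d := fun i => (Finset.univ.filter (fun j => rel i j)).min' (hne i)
    with hrepf
  have hrelrep : ∀ i, rel i (repf i) := fun i =>
    (Finset.mem_filter.mp (Finset.min'_mem _ (hne i))).2
  have hclass : ∀ i j, rel i j →
      Finset.univ.filter (fun k => rel i k) = Finset.univ.filter (fun k => rel j k) := by
    intro i j hij
    ext k
    simp only [Finset.mem_filter, Finset.mem_univ, true_and]
    constructor
    · intro hik
      exact hsame k j i (hrel_symm i k hik) (hrel_symm i j hij)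
    · intro hjk
      exact hsame k i j (hrel_symm j k hjk) hij
  have hrep_eq : ∀ i j, rel i j → repf i = repf j := by
    intro i j h
    simp only [hrepf]
    congr 1
    exact hclass i j h
  have hrep_rel : ∀ i j, repf i = repf j → rel i j := by
    intro i j h
    have h1 := hrelrep i
    rw [h] at h1
    exact hrel_symm _ _ (hsame i j (repf j) h1 (hrelrep j))
  have hrep_idem : ∀ i, repf (repf i) = repf i := fun i =>
    (hrep_eq i (repf i) (hrelrep i)).symm
  set w0 : Fin d → ℝ := fun r => ∑ i ∈ Finset.univ.filter (fun i => repf i = r), p i with hw0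
  have hw0pos : ∀ r, repf r = r → 0 < w0 r := by
    intro r hr
    refine Finset.sum_pos' (fun i _ => hpnn i) ?_
    exact ⟨r, Finset.mem_filter.mpr ⟨Finset.mem_univ r, hr⟩, hdiag r⟩
  set v : Fin d → EuclideanSpace ℂ (Fin d) := fun r =>
    WithLp.toLp 2 (fun i => if repf i = r then ρ i r / ((Real.sqrt (p r * w0 r) : ℝ) : ℂ) else 0) with hv
  have hterm : ∀ a, repf a = a → ∀ i,
      (starRingEnd ℂ) (v a i) * v a i
        = if repf i = a then ((p i * p a : ℝ) : ℂ) / ((p a * w0 a : ℝ) : ℂ) else 0 := by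
    intro a ha i
    by_cases h : repf i = a
    · simp only [hv, WithLp.ofLp_toLp, if_pos h]
      rw [map_div₀, Complex.conj_ofReal, div_mul_div_comm]
      congr 1
      · rw [mul_comm, Complex.mul_conj, hnormSq i a (hrep_rel i a (h.trans ha.symm))]
      · rw [← Complex.ofReal_mul, Real.mul_self_sqrt (mul_nonneg (hpnn a) (Finset.sum_nonneg
          (fun i _ => hpnn i)))]
    · simp [hv, h]
  have hON : Orthonormal ℂ (({r | repf r = r} : Set (Fin d)).restrict v) := by
    rw [orthonormal_iff_ite]
    rintro ⟨a, ha⟩ ⟨b, hb⟩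
    rw [PiLp.inner_apply]
    simp only [RCLike.inner_apply']
    by_cases hab : a = b
    · subst hab
      rw [if_pos rfl]
      have hnum : ∑ i ∈ Finset.univ.filter (fun i => repf i = a), ((p i * p a : ℝ) : ℂ)
          = ((w0 a * p a : ℝ) : ℂ) := by
        rw [hw0]
        push_cast
        rw [← Finset.sum_mul]
      calc ∑ i, (starRingEnd ℂ) (v a i) * v a i
          = ∑ i, (if repf i = a then ((p i * p a : ℝ) : ℂ) / ((p a * w0 a : ℝ) : ℂ) else 0) :=
            Finset.sum_congr rfl fun i _ => hterm a ha i
        _ = ∑ i ∈ Finset.univ.filter (fun i => repf i = a),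
              ((p i * p a : ℝ) : ℂ) / ((p a * w0 a : ℝ) : ℂ) := (Finset.sum_filter _ _).symm
        _ = ((w0 a * p a : ℝ) : ℂ) / ((p a * w0 a : ℝ) : ℂ) := by
            rw [← Finset.sum_div, hnum]
        _ = 1 := by
            rw [div_eq_one_iff_eq
              (Complex.ofReal_ne_zero.mpr (mul_pos (hdiag a) (hw0pos a ha)).ne')]
            push_cast
            ring
    · rw [if_neg (fun h => hab (congrArg Subtype.val h))]
      refine Finset.sum_eq_zero fun i _ => ?_
      by_cases h1 : repf i = a
      · have h2 : ¬ repf i = b := fun h2 => hab (h1.symm.trans h2)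
        simp [hv, Set.restrict, h1, h2, hab]
      · simp [hv, Set.restrict, h1]
  have hcard : Module.finrank ℂ (EuclideanSpace ℂ (Fin d)) = Fintype.card (Fin d) := by
    simp
  obtain ⟨bb, hbb⟩ := hON.exists_orthonormalBasis_extension_of_card_eq hcard
  set V : Matrix (Fin d) (Fin d) ℂ := Matrix.of (fun i j => bb j i) with hV
  have hV1 : star V * V = 1 := by
    ext j k
    rw [Matrix.mul_apply, Matrix.one_apply]
    have h := orthonormal_iff_ite.mp bb.orthonormal j k
    rw [PiLp.inner_apply] at h
    simp only [RCLike.inner_apply'] at h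
    simpa only [Matrix.star_apply, hV, Matrix.of_apply, Complex.star_def] using h
  have hV2 : V * star V = 1 := mul_eq_one_comm.mp hV1
  have hVcol : ∀ j, repf j = j → ∀ i,
      V i j = if repf i = j then ρ i j / ((Real.sqrt (p j * w0 j) : ℝ) : ℂ) else 0 := by
    intro j hj i
    have := hbb j hj
    rw [hV, Matrix.of_apply, this, hv]
  set w : Fin d → ℝ := fun j => if repf j = j then w0 j else 0 with hwdef
  have hwnn : ∀ j, 0 ≤ w j := by
    intro j
    by_cases h : repf j = j
    · rw [hwdef]; simp only [if_pos h]; exact (hw0pos j h).le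
    · rw [hwdef]; simp [if_neg h]
  have hcc : ∀ r, repf r = r →
      ((Real.sqrt (p r * w0 r) : ℝ) : ℂ) * ((Real.sqrt (p r * w0 r) : ℝ) : ℂ)
        = ((p r : ℝ) : ℂ) * ((w0 r : ℝ) : ℂ) := by
    intro r hr
    rw [← Complex.ofReal_mul, Real.mul_self_sqrt (mul_nonneg (hpnn r) (hw0pos r hr).le)]
    push_cast
    ring
  have hcne : ∀ r, repf r = r → ((Real.sqrt (p r * w0 r) : ℝ) : ℂ) ≠ 0 := by
    intro r hr
    exact Complex.ofReal_ne_zero.mpr (Real.sqrt_pos.mpr (mul_pos (hdiag r) (hw0pos r hr))).ne'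
  have htrim_eq : trim ρ = V * Matrix.diagonal (fun j => (w j : ℂ)) * star V := by
    ext i k
    have hRHS : (V * Matrix.diagonal (fun j => (w j : ℂ)) * star V) i k
        = ∑ j, V i j * (w j : ℂ) * (starRingEnd ℂ) (V k j) := by
      rw [Matrix.mul_apply]
      exact Finset.sum_congr rfl fun j _ => by
        rw [Matrix.mul_diagonal, Matrix.star_apply, Complex.star_def]
    rw [hRHS]
    rw [Finset.sum_eq_single (repf i)]
    rotate_left
    · intro j _ hj
      by_cases hjj : repf j = j
      · rw [hVcol j hjj i, if_neg (fun h => hj h.symm)]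
        ring
      · rw [hwdef]
        simp only [if_neg hjj]
        push_cast
        ring
    · intro h
      exact absurd (Finset.mem_univ _) h
    · have hr : repf (repf i) = repf i := hrep_idem i
      rw [hVcol (repf i) hr i, if_pos rfl, hVcol (repf i) hr k]
      rw [hwdef]
      simp only [if_pos hr]
      by_cases hik : repf k = repf i
      · rw [if_pos hik]
        have hrelik : rel i k := hrep_rel i k hik.symm
        rw [htrim_apply, if_pos hrelik]
        have hrelkr : rel k (repf i) := by
          have := hrelrep k
          rwa [hik] at this
        have hb := hblock k (repf i) hrelkr i
        rw [map_div₀, Complex.conj_ofReal, hconj (repf i) k]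
        have hstep : ρ i (repf i) / ((Real.sqrt (p (repf i) * w0 (repf i)) : ℝ) : ℂ)
              * ((w0 (repf i) : ℝ) : ℂ)
              * (ρ (repf i) k / ((Real.sqrt (p (repf i) * w0 (repf i)) : ℝ) : ℂ))
            = ρ i (repf i) * ρ (repf i) k * ((w0 (repf i) : ℝ) : ℂ)
              / (((Real.sqrt (p (repf i) * w0 (repf i)) : ℝ) : ℂ)
                * ((Real.sqrt (p (repf i) * w0 (repf i)) : ℝ) : ℂ)) := by
          ring
        rw [hstep, hcc (repf i) hr, ← hb]
        have hpne : ((p (repf i) : ℝ) : ℂ) ≠ 0 := Complex.ofReal_ne_zero.mpr (hdiag (repf i)).ne'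
        have hw0ne : ((w0 (repf i) : ℝ) : ℂ) ≠ 0 :=
          Complex.ofReal_ne_zero.mpr (hw0pos (repf i) hr).ne'
        field_simp
      · rw [if_neg hik]
        have hnrel : ¬ rel i k := fun h => hik ((hrep_eq i k h).symm)
        rw [htrim_apply, if_neg hnrel]
        simp
  have hPSDtrim : (trim ρ).PosSemidef := by
    rw [htrim_eq, Matrix.star_eq_conjTranspose]
    exact (Matrix.posSemidef_diagonal_iff.mpr fun j =>
      Complex.zero_le_real.mpr (hwnn j)).mul_mul_conjTranspose_same V
  have hsum_p : ∑ i, p i = 1 := by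
    have h := congrArg Complex.re htr
    rw [Matrix.trace] at h
    rw [Complex.re_sum] at h
    exact h
  have hsum_w : ∑ j, w j = 1 := by
    have h1 : ∑ j, w j
        = ∑ j ∈ Finset.univ.filter (fun j => repf j = j), w0 j := by
      rw [Finset.sum_filter]
    have h2 : ∑ j ∈ Finset.univ.filter (fun j => repf j = j), w0 j = ∑ i, p i := by
      rw [hw0]
      exact Finset.sum_fiberwise_of_maps_to
        (fun x _ => Finset.mem_filter.mpr ⟨Finset.mem_univ _, hrep_idem x⟩) p
    rw [h1, h2, hsum_p]
  have hdiagW : star V * trim ρ * V = Matrix.diagonal (fun j => (w j : ℂ)) := by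
    rw [htrim_eq, Matrix.mul_assoc, Matrix.mul_assoc, hV1, Matrix.mul_one, ← Matrix.mul_assoc,
      hV1, Matrix.one_mul]
  have hM : (star V * ρ * V).PosSemidef := by
    rw [Matrix.star_eq_conjTranspose]
    exact hρ.conjTranspose_mul_mul_same V
  have hentry : ∀ (B : Matrix (Fin d) (Fin d) ℂ) (j j' : Fin d),
      (star V * B * V) j j' = ∑ k, (∑ i, (starRingEnd ℂ) (V i j) * B i k) * V k j' := by
    intro B j j'
    rw [Matrix.mul_apply]
    refine Finset.sum_congr rfl fun k _ => ?_
    rw [Matrix.mul_apply]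
    simp [Matrix.star_apply, Complex.star_def]
  have hqrep : ∀ j, repf j = j → ((star V * ρ * V) j j) = ((w j : ℝ) : ℂ) := by
    intro j hj
    have heq : (star V * ρ * V) j j = (star V * trim ρ * V) j j := by
      rw [hentry, hentry]
      refine Finset.sum_congr rfl fun k _ => ?_
      by_cases hk : repf k = j
      · congr 1
        refine Finset.sum_congr rfl fun i _ => ?_
        by_cases hi : repf i = j
        · have hrelik : rel i k := hrep_rel i k (hi.trans hk.symm)
          rw [htrim_apply, if_pos hrelik]
        · rw [hVcol j hj i, if_neg hi]
          simp
      · rw [hVcol j hj k, if_neg hk]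
        ring
    rw [heq, hdiagW, Matrix.diagonal_apply_eq]
  have hQsum : ∑ j, ((star V * ρ * V) j j).re = 1 := by
    have htrace : (star V * ρ * V).trace = ρ.trace := by
      rw [Matrix.trace_mul_cycle, hV2, Matrix.one_mul]
    have h := congrArg Complex.re (htrace.trans htr)
    rw [Matrix.trace, Complex.re_sum] at h
    exact h
  have hqnn : ∀ j, 0 ≤ ((star V * ρ * V) j j).re := by
    intro j
    have h := hM.re_dotProduct_nonneg (Pi.single j 1)
    have hx : dotProduct (star (Pi.single j (1 : ℂ)))
        ((star V * ρ * V).mulVec (Pi.single j 1)) = (star V * ρ * V) j j := by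
      rw [Matrix.mulVec_single]
      simp [dotProduct, Pi.single_apply, apply_ite (star : ℂ → ℂ), ite_mul,
        Finset.sum_ite_eq]
    rw [hx] at h
    exact h
  have hq : ∀ j, ((star V * ρ * V) j j).re = w j := by
    have hsplit := Finset.sum_filter_add_sum_filter_not Finset.univ (fun j => repf j = j)
      (fun j => ((star V * ρ * V) j j).re)
    have hS : ∑ j ∈ Finset.univ.filter (fun j => repf j = j), ((star V * ρ * V) j j).re
        = 1 := by
      calc ∑ j ∈ Finset.univ.filter (fun j => repf j = j), ((star V * ρ * V) j j).re
          = ∑ j ∈ Finset.univ.filter (fun j => repf j = j), w j :=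
            Finset.sum_congr rfl fun j hj => by
              rw [hqrep j (Finset.mem_filter.mp hj).2, Complex.ofReal_re]
        _ = ∑ j, w j := by
            refine Finset.sum_subset (Finset.filter_subset _ _) fun x _ hx => ?_
            have hx' : ¬ repf x = x := by
              intro hc
              exact hx (Finset.mem_filter.mpr ⟨Finset.mem_univ _, hc⟩)
            rw [hwdef]
            simp [hx']
        _ = 1 := hsum_w
    have hnotS : ∀ j ∈ Finset.univ.filter (fun j => ¬ repf j = j),
        ((star V * ρ * V) j j).re = 0 := by
      have hzero : ∑ j ∈ Finset.univ.filter (fun j => ¬ repf j = j),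
          ((star V * ρ * V) j j).re = 0 := by
        have := hsplit.trans hQsum
        rw [hS] at this
        linarith
      intro j hj
      exact (Finset.sum_eq_zero_iff_of_nonneg (fun i _ => hqnn i)).mp hzero j hj
    intro j
    by_cases hj : repf j = j
    · rw [hqrep j hj, Complex.ofReal_re, hwdef]
    · rw [hnotS j (Finset.mem_filter.mpr ⟨Finset.mem_univ _, hj⟩), hwdef]
      simp [hj]
  have hvN : ∀ {A : Matrix (Fin d) (Fin d) ℂ} (hA : A.IsHermitian),
      vNEntropy hA = ∑ k, Real.negMulLog (hA.eigenvalues k) := by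
    intro A hA
    simp [vNEntropy, Real.negMulLog, neg_mul, Finset.sum_neg_distrib]
  have hΔeq : (Matrix.diagonal fun i => ρ i i)
      = 1 * Matrix.diagonal (fun j => ((p j : ℝ) : ℂ))
        * star (1 : Matrix (Fin d) (Fin d) ℂ) := by
    rw [star_one, Matrix.one_mul, Matrix.mul_one]
    exact congrArg Matrix.diagonal (funext fun i => hdiagC i)
  have hΔsum : vNEntropy hΔ = ∑ j, Real.negMulLog (p j) := by
    rw [hvN hΔ]
    exact eigsum_eq' hΔ 1 (by rw [star_one, Matrix.one_mul])
      (by rw [star_one, Matrix.mul_one]) p hpnn hΔeq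
  have htsum : vNEntropy ht = ∑ j, Real.negMulLog (w j) := by
    rw [hvN ht]
    exact eigsum_eq' ht V hV1 hV2 w hwnn htrim_eq
  have hineq2 : vNEntropy hρ.isHermitian ≤ vNEntropy ht := by
    rw [hvN hρ.isHermitian, htsum]
    calc ∑ k, Real.negMulLog (hρ.isHermitian.eigenvalues k)
        ≤ ∑ j, Real.negMulLog (((star V * ρ * V) j j).re) := core' hρ V hV1 hV2
      _ = ∑ j, Real.negMulLog (w j) := Finset.sum_congr rfl fun j _ => by rw [hq j]
  have hineq1 : vNEntropy ht ≤ vNEntropy hΔ := by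
    rw [hvN ht, hΔsum]
    have h2 : ∀ j : Fin d, ((star (1 : Matrix (Fin d) (Fin d) ℂ) * trim ρ * (1 : Matrix (Fin d) (Fin d) ℂ)) j j).re = p j := by
      intro j
      rw [star_one, Matrix.one_mul, Matrix.mul_one, htrim_apply, if_pos (hrel_refl j)]
    calc ∑ k, Real.negMulLog (ht.eigenvalues k)
        = ∑ k, Real.negMulLog (hPSDtrim.1.eigenvalues k) := rfl
      _ ≤ ∑ j, Real.negMulLog (((star (1 : Matrix (Fin d) (Fin d) ℂ) * trim ρ * (1 : Matrix (Fin d) (Fin d) ℂ)) j j).re) :=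
          core' hPSDtrim 1 (by rw [star_one, Matrix.one_mul]) (by rw [star_one, Matrix.mul_one])
      _ = ∑ j, Real.negMulLog (p j) := Finset.sum_congr rfl fun j _ => by rw [h2 j]
  exact ⟨by linarith, by linarith⟩
end

section
/- Q(ρ) > 0 if and only if η(ρ) = 1; that is, the trimmed-state entropy difference is strictly positive iff there exist distinct indices i ≠ j with |ρ_{ij}| = √(ρ_{ii}ρ_{jj}) > 0. -/
open scoped ComplexOrder

open scoped Classical

noncomputable def eta {n : Type*} [Fintype n] (A : Matrix n n ℂ) : ℝ :=
  sSup {x : ℝ | ∃ i j : n, i ≠ j ∧ A i i ≠ 0 ∧ A j j ≠ 0 ∧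
    x = ‖A i j‖ / Real.sqrt ((A i i).re * (A j j).re)}

open Polynomial in
lemma charpoly_diag' {n : Type*} [Fintype n] [DecidableEq n] {R : Type*} [CommRing R] (v : n → R) :
    Matrix.charpoly (Matrix.diagonal v) = ∏ i, (X - C (v i)) := by
  have h : Matrix.charmatrix (Matrix.diagonal v) = Matrix.diagonal (fun i => X - C (v i)) := by
    ext i j
    by_cases hij : i = j
    · subst hij; simp [Matrix.charmatrix_apply_eq]
    · simp [Matrix.charmatrix_apply_ne _ _ _ hij, Matrix.diagonal_apply_ne _ hij]
  rw [Matrix.charpoly, h, Matrix.det_diagonal]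

lemma charpoly_unitary_conj {n : Type*} [Fintype n] [DecidableEq n] (U A : Matrix n n ℂ)
    (hU : U ∈ Matrix.unitaryGroup n ℂ) :
    Matrix.charpoly (U * A * star U) = Matrix.charpoly A := by
  have h1 : U * star U = 1 := (Matrix.mem_unitaryGroup_iff).mp hU
  have hcomm : ∀ M : Matrix n n (Polynomial ℂ),
      Matrix.scalar n (Polynomial.X : Polynomial ℂ) * M = M * Matrix.scalar n Polynomial.X :=
    fun M => (Matrix.scalar_commute _ (fun r => Polynomial.commute_X r) M).eq
  have hcm : Matrix.charmatrix (U * A * star U)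
      = (Polynomial.C : ℂ →+* Polynomial ℂ).mapMatrix U * Matrix.charmatrix A
        * (Polynomial.C : ℂ →+* Polynomial ℂ).mapMatrix (star U) := by
    rw [Matrix.charmatrix, Matrix.charmatrix, map_mul, map_mul]
    rw [mul_sub, sub_mul]
    congr 1
    rw [← hcomm, mul_assoc, ← map_mul, h1, map_one, mul_one]
  have hdet : (Polynomial.C.mapMatrix U).det * (Polynomial.C.mapMatrix (star U)).det = 1 := by
    rw [← Matrix.det_mul, ← map_mul, h1, map_one, Matrix.det_one]
  rw [Matrix.charpoly, Matrix.charpoly, hcm, Matrix.det_mul, Matrix.det_mul]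
  rw [mul_comm ((Polynomial.C.mapMatrix U).det), mul_assoc, hdet, mul_one]

open Polynomial in
lemma eig_multiset {n : Type*} [Fintype n] [DecidableEq n] {A : Matrix n n ℂ}
    (hA : A.IsHermitian) (U : Matrix n n ℂ) (hU : U ∈ Matrix.unitaryGroup n ℂ) (D : n → ℝ)
    (hAU : A = U * Matrix.diagonal (fun i => (D i : ℂ)) * star U) :
    (Finset.univ.val.map hA.eigenvalues) = Finset.univ.val.map D := by
  have h1 : Matrix.charpoly A = ∏ i, (X - C ((D i : ℂ))) := by
    rw [hAU, charpoly_unitary_conj _ _ hU, charpoly_diag']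
  have h2 : Matrix.charpoly A = ∏ i, (X - C ((hA.eigenvalues i : ℂ))) := by
    conv_lhs => rw [hA.spectral_theorem]
    rw [Unitary.conjStarAlgAut_apply, charpoly_unitary_conj _ _ (hA.eigenvectorUnitary).2, charpoly_diag']
    rfl
  have h3 : (∏ i, (X - C ((hA.eigenvalues i : ℂ)))) = ∏ i, (X - C ((D i : ℂ))) := h2 ▸ h1
  have key : ∀ f : n → ℂ, (∏ i, (X - C (f i))).roots = Finset.univ.val.map f := by
    intro f
    rw [Finset.prod_eq_multiset_prod,
      ← roots_multiset_prod_X_sub_C (Finset.univ.val.map f), Multiset.map_map]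
    rfl
  have h4 : (Finset.univ.val.map fun i => ((hA.eigenvalues i : ℂ)))
      = Finset.univ.val.map fun i => ((D i : ℂ)) := by
    have := congrArg Polynomial.roots h3
    rwa [key, key] at this
  have : (Finset.univ.val.map hA.eigenvalues).map (fun x : ℝ => (x : ℂ))
      = (Finset.univ.val.map D).map (fun x : ℝ => (x : ℂ)) := by
    rw [Multiset.map_map, Multiset.map_map]; exact h4
  exact Multiset.map_injective Complex.ofReal_injective this

/-- If a Hermitian matrix is unitarily conjugate to a real diagonal matrix, its entropy-type sums
can be computed from the diagonal. -/
lemma vN_eq_of_unitary {n : Type*} [Fintype n] [DecidableEq n] {A : Matrix n n ℂ}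
    (hA : A.IsHermitian) (U : Matrix n n ℂ) (hU : U ∈ Matrix.unitaryGroup n ℂ) (D : n → ℝ)
    (hAU : A = U * Matrix.diagonal (fun i => (D i : ℂ)) * star U) :
    vNEntropy hA = -∑ i, D i * Real.log (D i) := by
  have h := eig_multiset hA U hU D hAU
  unfold vNEntropy
  congr 1
  have : ∀ f : n → ℝ, (∑ i, f i * Real.log (f i))
      = ((Finset.univ.val.map f).map (fun x : ℝ => x * Real.log x)).sum := by
    intro f
    rw [Multiset.map_map]
    rfl
  rw [this, this, h]

lemma vN_congr {n : Type*} [Fintype n] [DecidableEq n] {A B : Matrix n n ℂ} (h : A = B)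
    (hA : A.IsHermitian) (hB : B.IsHermitian) : vNEntropy hA = vNEntropy hB := by
  subst h; rfl

theorem stmt_13 {d : ℕ} (ρ : Matrix (Fin d) (Fin d) ℂ) (hρ : ρ.PosSemidef)
    (htr : ρ.trace = 1) (hdiag : ∀ i, 0 < (ρ i i).re)
    (hΔ : (Matrix.diagonal fun i => ρ i i).IsHermitian)
    (ht : (trim ρ).IsHermitian) :
    0 < vNEntropy hΔ - vNEntropy ht ↔ eta ρ = 1 := by
  obtain ⟨B, hB⟩ : ∃ B : Matrix (Fin d) (Fin d) ℂ, ρ = B.conjTranspose * B := by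
    open scoped MatrixOrder in exact CStarAlgebra.nonneg_iff_eq_star_mul_self.mp hρ.nonneg
  set p : Fin d → ℝ := fun i => (ρ i i).re with hp
  set x : Fin d → EuclideanSpace ℂ (Fin d) := fun i => WithLp.toLp 2 (fun k => B k i) with hx
  have hinner : ∀ i j, ρ i j = (inner ℂ (x i) (x j) : ℂ) := by
    intro i j
    rw [hB]
    simp [Matrix.mul_apply, PiLp.inner_apply, x, Matrix.conjTranspose_apply]
    exact Finset.sum_congr rfl (fun _ _ => mul_comm _ _)
  have hdr : ∀ i, ρ i i = ((p i : ℝ) : ℂ) := by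
    intro i
    have := hρ.1
    have h2 : (starRingEnd ℂ) (ρ i i) = ρ i i := by
      conv_lhs => rw [← this]
      simp [Matrix.conjTranspose_apply]
    exact (Complex.conj_eq_iff_re.mp h2).symm
  have hnorm : ∀ i, ‖x i‖ ^ 2 = p i := by
    intro i
    have h1 : (inner ℂ (x i) (x i) : ℂ) = ((‖x i‖ : ℝ) : ℂ) ^ 2 := inner_self_eq_norm_sq_to_K (x i)
    have h2 : ((p i : ℝ) : ℂ) = ((‖x i‖ : ℝ) : ℂ) ^ 2 := by rw [← hdr, hinner i i, h1]
    have := congrArg Complex.re h2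
    simpa [← Complex.ofReal_pow] using this.symm
  have hsq : ∀ i, Real.sqrt (p i) = ‖x i‖ := by
    intro i
    rw [← hnorm i, Real.sqrt_sq (norm_nonneg _)]
  have hxne : ∀ i, x i ≠ 0 := by
    intro i h
    have h2 := hnorm i
    rw [h] at h2
    simp at h2
    have := hdiag i
    rw [show (ρ i i).re = p i from rfl, ← h2] at this
    exact lt_irrefl 0 this
  have habs : ∀ i j, ‖ρ i j‖ = ‖(inner ℂ (x i) (x j) : ℂ)‖ := by
    intro i j; rw [hinner i j]
  have hCS : ∀ i j, ‖ρ i j‖ ≤ Real.sqrt (p i * p j) := by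
    intro i j
    rw [habs, Real.sqrt_mul (le_of_lt (hdiag i)), hsq, hsq]
    exact norm_inner_le_norm _ _
  have hiff : ∀ i j, (‖ρ i j‖ = Real.sqrt ((ρ i i).re * (ρ j j).re)) ↔
      ∃ c : ℂ, c ≠ 0 ∧ x j = c • x i := by
    intro i j
    rw [show (ρ i i).re = p i from rfl, show (ρ j j).re = p j from rfl]
    rw [habs, Real.sqrt_mul (le_of_lt (hdiag i)), hsq, hsq]
    exact norm_inner_eq_norm_iff (hxne i) (hxne j)
  have hsqpos : ∀ i j : Fin d, 0 < Real.sqrt (p i * p j) := fun i j =>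
    Real.sqrt_pos.mpr (mul_pos (hdiag i) (hdiag j))
  -- the set in eta
  set S : Set ℝ := {y : ℝ | ∃ i j : Fin d, i ≠ j ∧ ρ i i ≠ 0 ∧ ρ j j ≠ 0 ∧
    y = ‖ρ i j‖ / Real.sqrt ((ρ i i).re * (ρ j j).re)} with hS
  have hSfin : S.Finite := by
    apply Set.Finite.subset (Set.finite_range
      (fun ij : Fin d × Fin d => ‖ρ ij.1 ij.2‖ /
        Real.sqrt ((ρ ij.1 ij.1).re * (ρ ij.2 ij.2).re)))
    rintro y ⟨i, j, _, _, _, rfl⟩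
    exact ⟨(i, j), rfl⟩
  have hS1 : ∀ y ∈ S, y ≤ 1 := by
    rintro y ⟨i, j, _, _, _, rfl⟩
    rw [div_le_one (hsqpos i j)]
    exact hCS i j
  have hdne : ∀ i : Fin d, ρ i i ≠ 0 := by
    intro i h
    have := hdiag i
    rw [h] at this
    simp at this
  have hEta1 : (∃ i j : Fin d, i ≠ j ∧
      ‖ρ i j‖ = Real.sqrt ((ρ i i).re * (ρ j j).re)) ↔ eta ρ = 1 := by
    constructor
    · rintro ⟨i, j, hij, he⟩
      have h1S : (1 : ℝ) ∈ S := by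
        refine ⟨i, j, hij, hdne i, hdne j, ?_⟩
        rw [he, div_self (ne_of_gt (hsqpos i j))]
      refine le_antisymm (csSup_le ⟨1, h1S⟩ hS1) (le_csSup hSfin.bddAbove h1S)
    · intro he
      have hSne : S.Nonempty := by
        by_contra h
        rw [Set.not_nonempty_iff_eq_empty] at h
        rw [eta, ← hS, h, Real.sSup_empty] at he
        norm_num at he
      have := hSne.csSup_mem hSfin
      rw [show sSup S = eta ρ from rfl, he] at this
      obtain ⟨i, j, hij, _, _, hval⟩ := this
      refine ⟨i, j, hij, ?_⟩
      rw [eq_comm, div_eq_one_iff_eq (ne_of_gt (hsqpos i j))] at hval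
      exact hval
  constructor
  · intro h
    by_contra hne
    have htd : trim ρ = Matrix.diagonal fun i => ρ i i := by
      ext i j
      by_cases hij : i = j
      · subst hij
        have hcond : ‖ρ i i‖ = Real.sqrt ((ρ i i).re * (ρ i i).re) := by
          rw [hdr i]
          simp only [Complex.norm_real, Real.norm_eq_abs, Complex.ofReal_re]
          rw [Real.sqrt_mul_self (le_of_lt (hdiag i))]
          exact abs_of_pos (hdiag i)
        simp [trim, hcond, Matrix.diagonal_apply_eq]
      · have hcond : ¬ (‖ρ i j‖ = Real.sqrt ((ρ i i).re * (ρ j j).re)) := by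
          intro hc
          exact hne (hEta1.mp ⟨i, j, hij, hc⟩)
        simp [trim, hcond, Matrix.diagonal_apply_ne _ hij]
    rw [vN_congr htd.symm hΔ ht] at h
    simp at h
  · intro he
    obtain ⟨i0, j0, hij0, heq0⟩ := hEta1.mpr he
    set r : Fin d → Fin d → Prop := fun i j => ∃ c : ℂ, c ≠ 0 ∧ x j = c • x i with hrdef
    have hrrefl : ∀ i, r i i := fun i => ⟨1, one_ne_zero, (one_smul ℂ (x i)).symm⟩
    have hrsymm : ∀ {i j}, r i j → r j i := by
      rintro i j ⟨e, he0, hex⟩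
      exact ⟨e⁻¹, inv_ne_zero he0, by rw [hex, smul_smul, inv_mul_cancel₀ he0, one_smul]⟩
    have hrtrans : ∀ {i j k}, r i j → r j k → r i k := by
      rintro i j k ⟨e, he0, hex⟩ ⟨f, hf0, hfx⟩
      exact ⟨f * e, mul_ne_zero hf0 he0, by rw [hfx, hex, smul_smul]⟩
    have hfne : ∀ i, (Finset.univ.filter (fun j => r i j)).Nonempty :=
      fun i => ⟨i, Finset.mem_filter.mpr ⟨Finset.mem_univ i, hrrefl i⟩⟩
    set rep : Fin d → Fin d := fun i => (Finset.univ.filter (fun j => r i j)).min' (hfne i)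
      with hrepdef
    have hrep_r : ∀ i, r i (rep i) :=
      fun i => (Finset.mem_filter.mp (Finset.min'_mem _ (hfne i))).2
    have hrep_eq : ∀ {i j}, r i j → rep i = rep j := by
      intro i j hij
      have hflt : (Finset.univ.filter (fun k => r i k)) = (Finset.univ.filter (fun k => r j k)) := by
        ext k
        simp only [Finset.mem_filter, Finset.mem_univ, true_and]
        exact ⟨fun h => hrtrans (hrsymm hij) h, fun h => hrtrans hij h⟩
      apply le_antisymm
      · apply Finset.min'_le
        rw [hflt]
        exact Finset.min'_mem _ (hfne j)
      · apply Finset.min'_le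
        rw [← hflt]
        exact Finset.min'_mem _ (hfne i)
    have hrep_rep : ∀ i, rep (rep i) = rep i := fun i => (hrep_eq (hrep_r i)).symm
    have hr_iff : ∀ i j, r i j ↔ rep i = rep j := by
      intro i j
      refine ⟨hrep_eq, fun h => hrtrans (hrep_r i) ?_⟩
      rw [h]
      exact hrsymm (hrep_r j)
    have hcex : ∀ i, ∃ e : ℂ, e ≠ 0 ∧ x i = e • x (rep i) := fun i => hrsymm (hrep_r i)
    set c : Fin d → ℂ := fun i => (hcex i).choose with hcdef
    have hc0 : ∀ i, c i ≠ 0 := fun i => (hcex i).choose_spec.1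
    have hcx : ∀ i, x i = c i • x (rep i) := fun i => (hcex i).choose_spec.2
    have hcnorm : ∀ i, ‖c i‖ ^ 2 * p (rep i) = p i := by
      intro i
      have h1 := hnorm i
      rw [hcx i, norm_smul, mul_pow] at h1
      rw [← h1, hnorm (rep i)]
    have htrim : ∀ i j, trim ρ i j = if rep i = rep j then
        (starRingEnd ℂ) (c i) * c j * ((p (rep i) : ℝ) : ℂ) else 0 := by
      intro i j
      by_cases hij : rep i = rep j
      · rw [if_pos hij]
        have hrij : r i j := (hr_iff i j).mpr hij
        have h2 : trim ρ i j = ρ i j := if_pos ((hiff i j).mpr hrij)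
        rw [h2, hinner i j, hcx i, hcx j, inner_smul_left, inner_smul_right, ← hij]
        rw [← hinner, hdr]
        ring
      · rw [if_neg hij]
        have h2 : ¬ (‖ρ i j‖ = Real.sqrt ((ρ i i).re * (ρ j j).re)) :=
          fun hc => hij (hrep_eq ((hiff i j).mp hc))
        exact if_neg h2
    set t : Fin d → ℝ := fun k => ∑ i ∈ Finset.univ.filter (fun i => rep i = k), p i with htdef
    have htpos : ∀ k, rep k = k → 0 < t k := by
      intro k hk
      apply Finset.sum_pos (fun i _ => hdiag i)
      exact ⟨k, Finset.mem_filter.mpr ⟨Finset.mem_univ k, hk⟩⟩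
    set u : Fin d → EuclideanSpace ℂ (Fin d) := fun k => WithLp.toLp 2 (fun i =>
      if rep i = k then (starRingEnd ℂ) (c i) * ((Real.sqrt (p k) / Real.sqrt (t k) : ℝ) : ℂ)
      else 0) with hudef
    have habsc : ∀ i, ‖c i‖ ^ 2 = p i / p (rep i) := by
      intro i
      rw [← hcnorm i]
      exact (mul_div_cancel_right₀ _ (show p (rep i) ≠ 0 from ne_of_gt (hdiag (rep i)))).symm
    have hinneru : ∀ k l, rep k = k → rep l = l →
        (inner ℂ (u k) (u l) : ℂ) = if k = l then 1 else 0 := by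
      intro k l hk hl
      rw [PiLp.inner_apply]
      simp only [RCLike.inner_apply']
      by_cases hkl : k = l
      · subst hkl
        rw [if_pos rfl]
        have hterm : ∀ i, (starRingEnd ℂ) (u k i) * u k i
            = if rep i = k then ((p i / t k : ℝ) : ℂ) else 0 := by
          intro i
          by_cases hik : rep i = k
          · rw [hudef]
            simp only [if_pos hik]
            rw [map_mul, Complex.conj_conj, Complex.conj_ofReal]
            have h3 : c i * ((Real.sqrt (p k) / Real.sqrt (t k) : ℝ) : ℂ) *
                ((starRingEnd ℂ) (c i) * ((Real.sqrt (p k) / Real.sqrt (t k) : ℝ) : ℂ))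
                = (c i * (starRingEnd ℂ) (c i)) *
                  (((Real.sqrt (p k) / Real.sqrt (t k) : ℝ) : ℂ) *
                    ((Real.sqrt (p k) / Real.sqrt (t k) : ℝ) : ℂ)) := by ring
            rw [h3, Complex.mul_conj, ← Complex.ofReal_mul, ← Complex.ofReal_mul]
            congr 1
            rw [← Complex.sq_norm, habsc i, hik]
            rw [div_mul_div_comm, Real.mul_self_sqrt (le_of_lt (hdiag k)),
              Real.mul_self_sqrt (le_of_lt (htpos k hk))]
            field_simp
            rw [mul_comm (p i) ((ρ k k).re)]
            exact mul_div_mul_left _ _ (ne_of_gt (hdiag k))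
          · rw [hudef]
            simp [hik]
        rw [Finset.sum_congr rfl (fun i _ => hterm i), ← Finset.sum_filter]
        rw [← Complex.ofReal_sum]
        rw [← Finset.sum_div, div_self (ne_of_gt (htpos k hk))]
        norm_num
      · rw [if_neg hkl]
        apply Finset.sum_eq_zero
        intro i _
        by_cases hik : rep i = k
        · have hil : ¬ rep i = l := by rw [hik]; exact hkl
          have : u l i = 0 := by rw [hudef]; simp [hil]
          rw [this, mul_zero]
        · have : u k i = 0 := by rw [hudef]; simp [hik]
          rw [this, map_zero, zero_mul]
    have huon : Orthonormal ℂ (Set.restrict {k : Fin d | rep k = k} u) := by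
      rw [orthonormal_iff_ite]
      rintro ⟨k, hk⟩ ⟨l, hl⟩
      show (inner ℂ (u k) (u l) : ℂ) = _
      rw [hinneru k l hk hl]
      by_cases hkl : k = l
      · subst hkl
        simp
      · rw [if_neg hkl, if_neg (fun h : (⟨k, hk⟩ : {k : Fin d | rep k = k}) = ⟨l, hl⟩ =>
          hkl (congrArg Subtype.val h))]
    have hcard : Module.finrank ℂ (EuclideanSpace ℂ (Fin d)) = Fintype.card (Fin d) := by
      simp [finrank_euclideanSpace]
    obtain ⟨b, hb⟩ := Orthonormal.exists_orthonormalBasis_extension_of_card_eq hcard huon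
    have hbu : ∀ k, rep k = k → b k = u k := fun k hk => hb k hk
    set U : Matrix (Fin d) (Fin d) ℂ := Matrix.of (fun i k => b k i) with hUdef
    have hbon := b.orthonormal
    rw [orthonormal_iff_ite] at hbon
    have hUu : U ∈ Matrix.unitaryGroup (Fin d) ℂ := by
      rw [Matrix.mem_unitaryGroup_iff']
      ext k l
      rw [Matrix.mul_apply, Matrix.one_apply]
      have hterm : ∀ i, (star U) k i * U i l = (starRingEnd ℂ) (b k i) * b l i := by
        intro i
        simp [hUdef, Matrix.conjTranspose_apply]
      rw [Finset.sum_congr rfl (fun i _ => hterm i)]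
      have := hbon k l
      rw [PiLp.inner_apply] at this
      simp only [RCLike.inner_apply'] at this
      exact this
    set D : Fin d → ℝ := fun k => if rep k = k then t k else 0 with hDdef
    have hsqp : ∀ k, rep k = k → Real.sqrt (p k) ≠ 0 :=
      fun k _ => ne_of_gt (Real.sqrt_pos.mpr (hdiag k))
    have hsqt : ∀ k, rep k = k → Real.sqrt (t k) ≠ 0 :=
      fun k hk => ne_of_gt (Real.sqrt_pos.mpr (htpos k hk))
    have hsum : ∀ k' k, rep k' = k' →
        ∑ j ∈ Finset.univ.filter (fun j => rep j = k'), c j * b k j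
        = ((Real.sqrt (t k') / Real.sqrt (p k') : ℝ) : ℂ) * (if k' = k then 1 else 0) := by
      intro k' k hk'
      have h1 := hbon k' k
      rw [hbu k' hk', PiLp.inner_apply] at h1
      simp only [RCLike.inner_apply'] at h1
      have h2 : ∀ i, (starRingEnd ℂ) (u k' i) * b k i
          = (if rep i = k' then
              ((Real.sqrt (p k') / Real.sqrt (t k') : ℝ) : ℂ) * (c i * b k i) else 0) := by
        intro i
        by_cases hik : rep i = k'
        · rw [hudef]
          simp only [if_pos hik]
          rw [map_mul, Complex.conj_conj, Complex.conj_ofReal]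
          ring
        · rw [hudef]
          simp [hik]
      rw [Finset.sum_congr rfl (fun i _ => h2 i), ← Finset.sum_filter, ← Finset.mul_sum] at h1
      have hone : ((Real.sqrt (t k') / Real.sqrt (p k') : ℝ) : ℂ) *
          ((Real.sqrt (p k') / Real.sqrt (t k') : ℝ) : ℂ) = 1 := by
        rw [← Complex.ofReal_mul]
        rw [div_mul_div_comm, mul_comm (Real.sqrt (t k'))]
        rw [div_self (mul_ne_zero (hsqp k' hk') (hsqt k' hk'))]
        norm_num
      calc ∑ j ∈ Finset.univ.filter (fun j => rep j = k'), c j * b k j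
          = (((Real.sqrt (t k') / Real.sqrt (p k') : ℝ) : ℂ) *
              ((Real.sqrt (p k') / Real.sqrt (t k') : ℝ) : ℂ)) *
            ∑ j ∈ Finset.univ.filter (fun j => rep j = k'), c j * b k j := by
            rw [hone, one_mul]
        _ = ((Real.sqrt (t k') / Real.sqrt (p k') : ℝ) : ℂ) * (if k' = k then 1 else 0) := by
            rw [mul_assoc, h1]
    have hcolsum : ∀ i k, (trim ρ * U) i k
        = (U * Matrix.diagonal (fun k => ((D k : ℝ) : ℂ))) i k := by
      intro i k
      rw [Matrix.mul_apply, Matrix.mul_diagonal]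
      have hterm : ∀ j, trim ρ i j * U j k
          = if rep j = rep i then
              ((starRingEnd ℂ) (c i) * ((p (rep i) : ℝ) : ℂ)) * (c j * b k j) else 0 := by
        intro j
        rw [htrim i j]
        by_cases hji : rep j = rep i
        · rw [if_pos hji.symm, if_pos hji]
          show (starRingEnd ℂ) (c i) * c j * ((p (rep i) : ℝ) : ℂ) * b k j = _
          ring
        · rw [if_neg (fun h => hji h.symm), if_neg hji, zero_mul]
      rw [Finset.sum_congr rfl (fun j _ => hterm j), ← Finset.sum_filter, ← Finset.mul_sum]
      rw [hsum (rep i) k (hrep_rep i)]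
      have hUik : U i k = b k i := rfl
      by_cases hik : rep i = k
      · have hk : rep k = k := by rw [← hik, hrep_rep]
        rw [if_pos hik, mul_one, hUik, hbu k hk, hudef]
        simp only [if_pos hik]
        have hD : D k = t k := by rw [hDdef]; simp [hk]
        rw [hik, hD]
        rw [mul_assoc, mul_assoc]
        congr 1
        rw [← Complex.ofReal_mul, ← Complex.ofReal_mul]
        congr 1
        have e1 : Real.sqrt (p k) * Real.sqrt (p k) = p k :=
          Real.mul_self_sqrt (le_of_lt (hdiag k))
        have e2 : Real.sqrt (t k) * Real.sqrt (t k) = t k :=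
          Real.mul_self_sqrt (le_of_lt (htpos k hk))
        set a := Real.sqrt (p k) with hadef
        set b := Real.sqrt (t k) with hbdef
        rw [← e1, ← e2]
        have ha0 : a ≠ 0 := hsqp k hk
        have hb0 : b ≠ 0 := hsqt k hk
        field_simp
      · rw [if_neg hik, mul_zero, mul_zero]
        by_cases hk : rep k = k
        · rw [hUik, hbu k hk, hudef]
          simp [hik]
        · have hD : D k = 0 := by rw [hDdef]; simp [hk]
          rw [hD]
          norm_num
    have hMU : trim ρ * U = U * Matrix.diagonal (fun k => ((D k : ℝ) : ℂ)) := by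
      ext i k
      exact hcolsum i k
    have hUU : U * star U = 1 := Matrix.mem_unitaryGroup_iff.mp hUu
    have hkey : trim ρ = U * Matrix.diagonal (fun k => ((D k : ℝ) : ℂ)) * star U := by
      rw [← hMU, Matrix.mul_assoc, hUU, Matrix.mul_one]
    have hvt : vNEntropy ht = -∑ k, D k * Real.log (D k) := vN_eq_of_unitary ht U hUu D hkey
    have hvΔ : vNEntropy hΔ = -∑ i, p i * Real.log (p i) := by
      apply vN_eq_of_unitary hΔ 1 (one_mem (Matrix.unitaryGroup (Fin d) ℂ)) p
      have hdd : (Matrix.diagonal fun i => ρ i i)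
          = Matrix.diagonal (fun i => ((p i : ℝ) : ℂ)) := by
        ext i j
        by_cases hij : i = j
        · subst hij
          rw [Matrix.diagonal_apply_eq, Matrix.diagonal_apply_eq]
          exact hdr i
        · rw [Matrix.diagonal_apply_ne _ hij, Matrix.diagonal_apply_ne _ hij]
      rw [hdd]
      simp
    rw [hvΔ, hvt]
    have hmain : ∑ i, p i * Real.log (p i) < ∑ k, D k * Real.log (D k) := by
      have hfib : ∑ i, p i * Real.log (p i)
          = ∑ k, ∑ i ∈ Finset.univ.filter (fun i => rep i = k), (p i * Real.log (p i)) :=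
        (Finset.sum_fiberwise_of_maps_to (fun i _ => Finset.mem_univ (rep i))
          (fun i => p i * Real.log (p i))).symm
      rw [hfib]
      have hler : ∀ k, rep k = k → ∀ i ∈ Finset.univ.filter (fun i => rep i = k),
          p i * Real.log (p i) ≤ p i * Real.log (t k) := by
        intro k hk i hi
        have hi' : rep i = k := (Finset.mem_filter.mp hi).2
        have hple : p i ≤ t k := by
          rw [← hi']
          exact Finset.single_le_sum (fun j _ => le_of_lt (hdiag j))
            (Finset.mem_filter.mpr ⟨Finset.mem_univ i, rfl⟩)
        exact mul_le_mul_of_nonneg_left (Real.log_le_log (hdiag i) hple) (le_of_lt (hdiag i))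
      apply Finset.sum_lt_sum
      · intro k _
        by_cases hk : rep k = k
        · have hD : D k = t k := by rw [hDdef]; simp [hk]
          rw [hD]
          calc ∑ i ∈ Finset.univ.filter (fun i => rep i = k), p i * Real.log (p i)
              ≤ ∑ i ∈ Finset.univ.filter (fun i => rep i = k), p i * Real.log (t k) :=
                Finset.sum_le_sum (hler k hk)
            _ = t k * Real.log (t k) := by rw [← Finset.sum_mul]
        · have hD : D k = 0 := by rw [hDdef]; simp [hk]
          have hempty : Finset.univ.filter (fun i => rep i = k) = ∅ := by
            ext i
            simp only [Finset.mem_filter, Finset.mem_univ, true_and, Finset.notMem_empty,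
              iff_false]
            intro hik
            exact hk (by rw [← hik, hrep_rep])
          rw [hD, hempty]
          simp
      · have hri0 : r i0 j0 := (hiff i0 j0).mp heq0
        have hrepj0 : rep j0 = rep i0 := (hrep_eq hri0).symm
        refine ⟨rep i0, Finset.mem_univ _, ?_⟩
        have hk : rep (rep i0) = rep i0 := hrep_rep i0
        have hD : D (rep i0) = t (rep i0) := by rw [hDdef]; simp [hk]
        rw [hD]
        have hi0mem : i0 ∈ Finset.univ.filter (fun i => rep i = rep i0) := by simp
        have hlt : p i0 < t (rep i0) := by
          have hsub : ({i0, j0} : Finset (Fin d)) ⊆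
              Finset.univ.filter (fun i => rep i = rep i0) := by
            intro z hz
            rcases Finset.mem_insert.mp hz with h | h
            · subst h; simp
            · rw [Finset.mem_singleton] at h
              subst h
              simp [hrepj0]
          have hsle := Finset.sum_le_sum_of_subset_of_nonneg hsub
            (fun i _ _ => le_of_lt (hdiag i))
          rw [Finset.sum_pair hij0] at hsle
          have hj0p := hdiag j0
          have : p i0 + p j0 ≤ t (rep i0) := hsle
          linarith
        calc ∑ i ∈ Finset.univ.filter (fun i => rep i = rep i0), p i * Real.log (p i)
            < ∑ i ∈ Finset.univ.filter (fun i => rep i = rep i0), p i * Real.log (t (rep i0)) := by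
              apply Finset.sum_lt_sum (hler (rep i0) hk)
              exact ⟨i0, hi0mem,
                mul_lt_mul_of_pos_left (Real.log_lt_log (hdiag i0) hlt) (hdiag i0)⟩
          _ = t (rep i0) * Real.log (t (rep i0)) := by rw [← Finset.sum_mul]
    linarith
end
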